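/- arXiv:2106.13340 — 4 statements merged into one kernel-verified Lean document; each statement's English description precedes it below -/
import Mathlib

section
/- For any real c ≥ 1/2 and p ≥ 2, the function ζ(γ) = (1 + cγ²/(2(1+γ)))^p / (1+γ) on γ > 0 attains its minimum at the unique point γ_c(p) = 2/(√(c²p² − (2c−1)) + cp − 1), and this point satisfies 1/(cp) ≤ γ_c(p) ≤ 2/(cp). -/
open Real Set in
private lemma zeta_hasDerivAt (c p x : ℝ) (hc : 0 < c) (hp : 1 ≤ p) (hx : 0 < x) :
    HasDerivAt (fun γ : ℝ => (1 + c * γ ^ 2 / (2 * (1 + γ))) ^ p / (1 + γ))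
      ((1 + c * x ^ 2 / (2 * (1 + x))) ^ (p - 1) *
        (c * (p - 1) * x ^ 2 + 2 * (c * p - 1) * x - 2) / (2 * (1 + x) ^ 3)) x := by
  have h1 : (0:ℝ) < 1 + x := by linarith
  have h2 : (2 * (1 + x)) ≠ 0 := by positivity
  have hq : 0 < 1 + c * x ^ 2 / (2 * (1 + x)) := by
    have : 0 ≤ c * x ^ 2 / (2 * (1 + x)) := by positivity
    linarith
  have hf : HasDerivAt (fun γ : ℝ => 1 + c * γ ^ 2 / (2 * (1 + γ)))
      ((c * (2 * x) * (2 * (1 + x)) - c * x ^ 2 * 2) / (2 * (1 + x)) ^ 2) x := by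
    have hnum : HasDerivAt (fun γ : ℝ => c * γ ^ 2) (c * (2 * x)) x := by
      simpa using ((hasDerivAt_pow 2 x).const_mul c)
    have hden : HasDerivAt (fun γ : ℝ => 2 * (1 + γ)) 2 x := by
      simpa using (((hasDerivAt_id x).const_add 1).const_mul 2)
    simpa using (hnum.div hden h2).const_add 1
  have hrpow := hf.rpow_const (Or.inr hp)
  have hden2 : HasDerivAt (fun γ : ℝ => 1 + γ) 1 x := by
    simpa using (hasDerivAt_id x).const_add 1
  have h := hrpow.div hden2 (ne_of_gt h1)
  refine h.congr_deriv ?_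
  have hsplit : (1 + c * x ^ 2 / (2 * (1 + x))) ^ p
      = (1 + c * x ^ 2 / (2 * (1 + x))) ^ (p - 1) * (1 + c * x ^ 2 / (2 * (1 + x))) := by
    rw [← Real.rpow_add_one (ne_of_gt hq)]
    ring_nf
  rw [hsplit]
  field_simp
  ring

open Real Set in
private lemma zeta_contOn (c p : ℝ) (hp : 0 ≤ p) :
    ContinuousOn (fun γ : ℝ => (1 + c * γ ^ 2 / (2 * (1 + γ))) ^ p / (1 + γ)) (Ici 0) := by
  have hne : ∀ x ∈ Ici (0:ℝ), 2 * (1 + x) ≠ 0 := by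
    intro x hx; have : (0:ℝ) ≤ x := hx; positivity
  have hne2 : ∀ x ∈ Ici (0:ℝ), 1 + x ≠ 0 := by
    intro x hx; have : (0:ℝ) ≤ x := hx; positivity
  have hf : ContinuousOn (fun γ : ℝ => 1 + c * γ ^ 2 / (2 * (1 + γ))) (Ici 0) := by
    apply continuousOn_const.add
    exact (continuousOn_const.mul ((continuous_pow 2).continuousOn)).div
      (continuousOn_const.mul (continuousOn_const.add continuousOn_id)) hne
  exact (hf.rpow_const (fun x _ => Or.inr hp)).div
    (continuousOn_const.add continuousOn_id) hne2

theorem zeta_min_point (c p : ℝ) (hc : 1 / 2 ≤ c) (hp : 2 ≤ p) :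
    let ζ : ℝ → ℝ := fun γ => (1 + c * γ ^ 2 / (2 * (1 + γ))) ^ p / (1 + γ)
    let γcp : ℝ := 2 / (Real.sqrt (c ^ 2 * p ^ 2 - (2 * c - 1)) + c * p - 1)
    γcp ∈ Set.Ioi (0 : ℝ) ∧
    IsMinOn ζ (Set.Ioi (0 : ℝ)) γcp ∧
    (∀ γ ∈ Set.Ioi (0 : ℝ), IsMinOn ζ (Set.Ioi (0 : ℝ)) γ → γ = γcp) ∧
    1 / (c * p) ≤ γcp ∧ γcp ≤ 2 / (c * p) := by
  intro ζ γcp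
  set D : ℝ := c ^ 2 * p ^ 2 - (2 * c - 1) with hD
  have hc0 : (0:ℝ) < c := by linarith
  have hp1 : (1:ℝ) < p := by linarith
  have hcp : (1:ℝ) ≤ c * p := by nlinarith
  have hDpos : 0 < D := by nlinarith
  have hs0sq : (Real.sqrt D) ^ 2 = D := Real.sq_sqrt hDpos.le
  have hs0pos : 0 < Real.sqrt D := Real.sqrt_pos.mpr hDpos
  set s : ℝ := Real.sqrt D + c * p - 1 with hsdef
  have hspos : 0 < s := by nlinarith
  have hgdef : γcp = 2 / s := rfl
  have hgpos : 0 < γcp := by rw [hgdef]; positivity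
  -- root identity
  have hroot : c * (p - 1) * γcp ^ 2 + 2 * (c * p - 1) * γcp - 2 = 0 := by
    have hskey : s ^ 2 = 2 * (c * p - 1) * s + 2 * c * (p - 1) := by nlinarith
    rw [hgdef]; field_simp; nlinarith
  -- sign of the quadratic N
  have hNneg : ∀ x, 0 < x → x < γcp → c * (p - 1) * x ^ 2 + 2 * (c * p - 1) * x - 2 < 0 := by
    intro x hx hxg
    have hb : 0 < c * (p-1) * (x + γcp) + 2 * (c*p-1) := by
      have := mul_pos (mul_pos hc0 (by linarith : (0:ℝ) < p - 1)) (by linarith : (0:ℝ) < x + γcp)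
      linarith
    nlinarith [mul_pos (sub_pos.mpr hxg) hb]
  have hNpos : ∀ x, γcp < x → 0 < c * (p - 1) * x ^ 2 + 2 * (c * p - 1) * x - 2 := by
    intro x hxg
    have hx0 : 0 < x := lt_trans hgpos hxg
    have hb : 0 < c * (p-1) * (x + γcp) + 2 * (c*p-1) := by
      have := mul_pos (mul_pos hc0 (by linarith : (0:ℝ) < p - 1)) (by linarith : (0:ℝ) < x + γcp)
      linarith
    nlinarith [mul_pos (sub_pos.mpr hxg) hb]
  -- continuity
  have hcont : ContinuousOn ζ (Set.Ici 0) := zeta_contOn c p (by linarith)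
  -- monotonicity pieces
  have hanti : StrictAntiOn ζ (Set.Icc 0 γcp) := by
    apply strictAntiOn_of_deriv_neg (convex_Icc _ _) (hcont.mono Set.Icc_subset_Ici_self)
    intro x hx
    rw [interior_Icc] at hx
    rw [(zeta_hasDerivAt c p x hc0 (by linarith) hx.1).deriv]
    have hx1 : (0:ℝ) < 1 + x := by linarith [hx.1]
    have hq : 0 < 1 + c * x ^ 2 / (2 * (1 + x)) := by
      have : 0 ≤ c * x ^ 2 / (2 * (1 + x)) := div_nonneg (by positivity) (by linarith)
      linarith
    have h1 := Real.rpow_pos_of_pos hq (p - 1)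
    have h2 : (0:ℝ) < 2 * (1 + x) ^ 3 := by positivity
    have h3 := hNneg x hx.1 hx.2
    exact div_neg_of_neg_of_pos (mul_neg_of_pos_of_neg h1 h3) h2
  have hmono : StrictMonoOn ζ (Set.Ici γcp) := by
    apply strictMonoOn_of_deriv_pos (convex_Ici _) (hcont.mono (Set.Ici_subset_Ici.mpr hgpos.le))
    intro x hx
    rw [interior_Ici] at hx
    have hx0 : 0 < x := lt_trans hgpos hx
    rw [(zeta_hasDerivAt c p x hc0 (by linarith) hx0).deriv]
    have hx1 : (0:ℝ) < 1 + x := by linarith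
    have hq : 0 < 1 + c * x ^ 2 / (2 * (1 + x)) := by
      have : 0 ≤ c * x ^ 2 / (2 * (1 + x)) := div_nonneg (by positivity) (by linarith)
      linarith
    have h1 := Real.rpow_pos_of_pos hq (p - 1)
    have h2 : (0:ℝ) < 2 * (1 + x) ^ 3 := by positivity
    exact div_pos (mul_pos h1 (hNpos x hx)) h2
  -- minimality
  have hmin : IsMinOn ζ (Set.Ioi (0:ℝ)) γcp := by
    rw [isMinOn_iff]
    intro x hx
    have hx0 : (0:ℝ) < x := hx
    rcases lt_trichotomy x γcp with h | h | h
    · exact le_of_lt (hanti ⟨hx0.le, h.le⟩ ⟨hgpos.le, le_refl _⟩ h)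
    · rw [h]
    · exact le_of_lt (hmono (Set.self_mem_Ici) h.le h)
  refine ⟨hgpos, hmin, ?_, ?_, ?_⟩
  · -- uniqueness
    intro γ hγ hminγ
    by_contra hne
    have h1 : ζ γ ≤ ζ γcp := (isMinOn_iff.mp hminγ) γcp hgpos
    have h2 : ζ γcp < ζ γ := by
      have hγ0 : (0:ℝ) < γ := hγ
      rcases lt_or_gt_of_ne hne with h | h
      · exact hanti ⟨hγ0.le, h.le⟩ ⟨hgpos.le, le_refl _⟩ h
      · exact hmono (Set.self_mem_Ici) h.le h
    linarith
  · have h2 : Real.sqrt D ≤ c * p + 1 := by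
      rw [show c * p + 1 = Real.sqrt ((c*p+1)^2) by rw [Real.sqrt_sq (by nlinarith)]]
      exact Real.sqrt_le_sqrt (by nlinarith)
    have hcp0 : (0:ℝ) < c * p := lt_of_lt_of_le one_pos hcp
    rw [hgdef, div_le_div_iff₀ hcp0 hspos]
    linarith
  · have h1 : (1:ℝ) ≤ Real.sqrt D := by
      rw [show (1:ℝ) = Real.sqrt 1 by simp]
      exact Real.sqrt_le_sqrt (by nlinarith)
    have hcp0 : (0:ℝ) < c * p := lt_of_lt_of_le one_pos hcp
    rw [hgdef, div_le_div_iff₀ hspos hcp0]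
    linarith
end

section
/- For any real c ≥ 1/2 and p ≥ 2, the minimum value of ζ_{p,c}(γ) = (1 + cγ²/(2(1+γ)))^p/(1+γ) over γ > 0 is at most e^{−1/(2cp)}. -/
open Real

/-- Generic helper: if `f` has derivative `f'` everywhere, and `f' ≤ 0` on `(0,∞)`,
then `f t ≤ f 0` for `t ≥ 0`. -/
lemma aux_deriv_nonpos_le {f f' : ℝ → ℝ}
    (hd : ∀ x, HasDerivAt f (f' x) x)
    (hf' : ∀ x, 0 < x → f' x ≤ 0) {t : ℝ} (ht : 0 ≤ t) : f t ≤ f 0 := by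
  have h1 : AntitoneOn f (Set.Ici 0) := by
    apply antitoneOn_of_deriv_nonpos (convex_Ici 0)
    · exact fun x _ => (hd x).differentiableAt.continuousAt.continuousWithinAt
    · exact fun x _ => (hd x).differentiableAt.differentiableWithinAt
    · intro x hx
      rw [interior_Ici] at hx
      rw [(hd x).deriv]
      exact hf' x hx
  exact h1 (Set.self_mem_Ici) (Set.mem_Ici.2 ht) ht

lemma aux_cosh_ge (x : ℝ) : 2 ≤ Real.exp x + Real.exp (-x) := by
  have h1 : Real.exp x * Real.exp (-x) = 1 := by
    rw [← Real.exp_add]; simp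
  nlinarith [Real.exp_pos x, Real.exp_pos (-x), sq_nonneg (Real.exp x - 1)]

/-- `cosh t - 1 ≤ t sinh t` (times 2). -/
lemma aux1 {t : ℝ} (ht : 0 ≤ t) :
    Real.exp t + Real.exp (-t) - 2 ≤ t * (Real.exp t - Real.exp (-t)) := by
  have key : ∀ x : ℝ, HasDerivAt
      (fun x : ℝ => Real.exp x + Real.exp (-x) - 2 - x * (Real.exp x - Real.exp (-x)))
      (-(x * (Real.exp x + Real.exp (-x)))) x := by
    intro x
    have h1 : HasDerivAt (fun x : ℝ => Real.exp (-x)) (-Real.exp (-x)) x := by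
      simpa [Function.comp_def] using (Real.hasDerivAt_exp (-x)).comp x ((hasDerivAt_id x).neg)
    have h2 : HasDerivAt (fun x : ℝ => Real.exp x - Real.exp (-x))
        (Real.exp x + Real.exp (-x)) x := by
      simpa [sub_neg_eq_add] using (Real.hasDerivAt_exp x).fun_sub h1
    have h3 : HasDerivAt (fun x : ℝ => x * (Real.exp x - Real.exp (-x)))
        (1 * (Real.exp x - Real.exp (-x)) + x * (Real.exp x + Real.exp (-x))) x :=
      (hasDerivAt_id x).mul h2
    have h4 : HasDerivAt (fun x : ℝ => Real.exp x + Real.exp (-x) - 2)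
        (Real.exp x - Real.exp (-x)) x := by
      simpa [sub_eq_add_neg] using ((Real.hasDerivAt_exp x).add h1).sub_const 2
    exact (h4.fun_sub h3).congr_deriv (by ring)
  have h := aux_deriv_nonpos_le key (fun x hx => by
    have := aux_cosh_ge x
    nlinarith) ht
  norm_num at h
  linarith

/-- `2 sinh t ≤ t (1 + cosh t)` (times 2). -/
lemma aux2 {t : ℝ} (ht : 0 ≤ t) :
    2 * (Real.exp t - Real.exp (-t)) ≤ t * (2 + Real.exp t + Real.exp (-t)) := by
  have key : ∀ x : ℝ, HasDerivAt
      (fun x : ℝ => 2 * (Real.exp x - Real.exp (-x)) - x * (2 + Real.exp x + Real.exp (-x)))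
      ((Real.exp x + Real.exp (-x) - 2) - x * (Real.exp x - Real.exp (-x))) x := by
    intro x
    have h1 : HasDerivAt (fun x : ℝ => Real.exp (-x)) (-Real.exp (-x)) x := by
      simpa [Function.comp_def] using (Real.hasDerivAt_exp (-x)).comp x ((hasDerivAt_id x).neg)
    have h2 : HasDerivAt (fun x : ℝ => 2 * (Real.exp x - Real.exp (-x)))
        (2 * (Real.exp x + Real.exp (-x))) x := by
      have := ((Real.hasDerivAt_exp x).fun_sub h1).const_mul 2
      exact this.congr_deriv (by ring)
    have h3 : HasDerivAt (fun x : ℝ => 2 + Real.exp x + Real.exp (-x))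
        (0 + Real.exp x + -Real.exp (-x)) x :=
      ((hasDerivAt_const x 2).add (Real.hasDerivAt_exp x)).add h1
    have h4 : HasDerivAt (fun x : ℝ => x * (2 + Real.exp x + Real.exp (-x)))
        (1 * (2 + Real.exp x + Real.exp (-x)) + x * (0 + Real.exp x + -Real.exp (-x))) x :=
      (hasDerivAt_id x).mul h3
    exact (h2.fun_sub h4).congr_deriv (by ring)
  have h := aux_deriv_nonpos_le key (fun x hx => by
    have h5 := aux1 hx.le
    linarith) ht
  norm_num at h
  linarith

/-- Key inequality: for `c ≥ 1/2`, `t ≥ 0`: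
`(1 + c(cosh t - 1)) ≤ exp(c t² / 2)`, in product form. -/
lemma aux3 {c t : ℝ} (hc : 1 / 2 ≤ c) (ht : 0 ≤ t) :
    1 + c * ((Real.exp t + Real.exp (-t)) / 2 - 1) ≤ Real.exp (c * t ^ 2 / 2) := by
  have hc0 : 0 < c := by linarith
  have key : ∀ x : ℝ, HasDerivAt
      (fun x : ℝ => (1 + c * ((Real.exp x + Real.exp (-x)) / 2 - 1)) *
        Real.exp (-(c * x ^ 2 / 2)))
      ((c * ((Real.exp x - Real.exp (-x)) / 2)) * Real.exp (-(c * x ^ 2 / 2)) +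
        (1 + c * ((Real.exp x + Real.exp (-x)) / 2 - 1)) *
          (Real.exp (-(c * x ^ 2 / 2)) * (-(c * x)))) x := by
    intro x
    have h1 : HasDerivAt (fun x : ℝ => Real.exp (-x)) (-Real.exp (-x)) x := by
      simpa [Function.comp_def] using (Real.hasDerivAt_exp (-x)).comp x ((hasDerivAt_id x).neg)
    have hD : HasDerivAt (fun x : ℝ => 1 + c * ((Real.exp x + Real.exp (-x)) / 2 - 1))
        (c * ((Real.exp x - Real.exp (-x)) / 2)) x := by
      have h2 : HasDerivAt (fun x : ℝ => (Real.exp x + Real.exp (-x)) / 2 - 1)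
          ((Real.exp x + -Real.exp (-x)) / 2) x :=
        (((Real.hasDerivAt_exp x).add h1).div_const 2).sub_const 1
      have := (h2.const_mul c).const_add 1
      exact this.congr_deriv (by ring)
    have hq : HasDerivAt (fun x : ℝ => -(c * x ^ 2 / 2)) (-(c * x)) x := by
      have h3 : HasDerivAt (fun x : ℝ => x ^ 2) (2 * x) x := by
        simpa using hasDerivAt_pow 2 x
      have := (((h3.const_mul c).div_const 2).fun_neg)
      exact this.congr_deriv (by ring)
    have hE : HasDerivAt (fun x : ℝ => Real.exp (-(c * x ^ 2 / 2)))
        (Real.exp (-(c * x ^ 2 / 2)) * (-(c * x))) x :=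
      (Real.hasDerivAt_exp _).comp x hq
    exact hD.mul hE
  have hder : ∀ x, 0 < x →
      (c * ((Real.exp x - Real.exp (-x)) / 2)) * Real.exp (-(c * x ^ 2 / 2)) +
        (1 + c * ((Real.exp x + Real.exp (-x)) / 2 - 1)) *
          (Real.exp (-(c * x ^ 2 / 2)) * (-(c * x))) ≤ 0 := by
    intro x hx
    have hE : 0 < Real.exp (-(c * x ^ 2 / 2)) := Real.exp_pos _
    have h5 := aux2 hx.le
    have hch := aux_cosh_ge x
    -- bracket : (e - e')/2 - x * (1 + c*((e+e')/2 - 1)) ≤ 0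
    have hbr : (Real.exp x - Real.exp (-x)) / 2 -
        x * (1 + c * ((Real.exp x + Real.exp (-x)) / 2 - 1)) ≤ 0 := by
      nlinarith [mul_nonneg (mul_nonneg hx.le (by linarith : (0:ℝ) ≤ Real.exp x + Real.exp (-x) - 2)) (by linarith : (0:ℝ) ≤ c - 1/2)]
    have hrw : (c * ((Real.exp x - Real.exp (-x)) / 2)) * Real.exp (-(c * x ^ 2 / 2)) +
        (1 + c * ((Real.exp x + Real.exp (-x)) / 2 - 1)) *
          (Real.exp (-(c * x ^ 2 / 2)) * (-(c * x))) =
        c * Real.exp (-(c * x ^ 2 / 2)) *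
          ((Real.exp x - Real.exp (-x)) / 2 -
            x * (1 + c * ((Real.exp x + Real.exp (-x)) / 2 - 1))) := by
      ring
    rw [hrw]
    exact mul_nonpos_of_nonneg_of_nonpos (by positivity) hbr
  have hfin := aux_deriv_nonpos_le key hder ht
  norm_num at hfin
  have hEpos : 0 < Real.exp (-(c * t ^ 2 / 2)) := Real.exp_pos _
  have hrw2 : Real.exp (c * t ^ 2 / 2) = 1 / Real.exp (-(c * t ^ 2 / 2)) := by
    rw [one_div, ← Real.exp_neg, neg_neg]
  rw [hrw2, le_div_iff₀ hEpos]
  linarith [hfin]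

theorem zeta_min_value (c p : ℝ) (hc : 1 / 2 ≤ c) (hp : 2 ≤ p) :
    sInf ((fun γ : ℝ => (1 + c * γ ^ 2 / (2 * (1 + γ))) ^ p / (1 + γ)) '' Set.Ioi (0 : ℝ))
      ≤ Real.exp (-1 / (2 * c * p)) := by
  have hc0 : 0 < c := by linarith
  have hp0 : 0 < p := by linarith
  have hcp : 0 < c * p := mul_pos hc0 hp0
  set t : ℝ := 1 / (c * p) with ht_def
  have ht : 0 < t := by positivity
  set γ : ℝ := Real.exp t - 1 with hγ_def
  have hγ : 0 < γ := by
    have h := Real.add_one_le_exp t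
    have h2 : 1 < Real.exp t := Real.one_lt_exp_iff.mpr ht
    simp only [hγ_def]
    linarith
  have h1γ : 1 + γ = Real.exp t := by simp [hγ_def]
  -- the base equals the cosh expression
  have hexpt : Real.exp t ≠ 0 := (Real.exp_pos t).ne'
  have hbase : 1 + c * γ ^ 2 / (2 * (1 + γ)) =
      1 + c * ((Real.exp t + Real.exp (-t)) / 2 - 1) := by
    rw [h1γ, Real.exp_neg, hγ_def]
    field_simp
    ring
  -- bounds on the base
  have hch := aux_cosh_ge t
  have hA0 : (0:ℝ) ≤ 1 + c * ((Real.exp t + Real.exp (-t)) / 2 - 1) := by nlinarith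
  have hA3 : 1 + c * ((Real.exp t + Real.exp (-t)) / 2 - 1) ≤ Real.exp (c * t ^ 2 / 2) :=
    aux3 hc ht.le
  -- crucial arithmetic: c * t^2 / 2 * p = t / 2
  have hctp : c * t ^ 2 / 2 * p = t / 2 := by
    have : c * p * t = 1 := by
      rw [ht_def]; field_simp
    nlinarith [this]
  -- bound the value at γ
  have hval : (1 + c * γ ^ 2 / (2 * (1 + γ))) ^ p / (1 + γ) ≤ Real.exp (-1 / (2 * c * p)) := by
    rw [hbase, h1γ]
    have h4 : (1 + c * ((Real.exp t + Real.exp (-t)) / 2 - 1)) ^ p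
        ≤ (Real.exp (c * t ^ 2 / 2)) ^ p := Real.rpow_le_rpow hA0 hA3 hp0.le
    have h5 : (Real.exp (c * t ^ 2 / 2)) ^ p = Real.exp (t / 2) := by
      rw [← Real.exp_mul, hctp]
    have h6 : -1 / (2 * c * p) = t / 2 - t := by
      rw [ht_def]; field_simp; ring
    rw [h6, Real.exp_sub]
    have h7 : (1 + c * ((Real.exp t + Real.exp (-t)) / 2 - 1)) ^ p ≤ Real.exp (t / 2) :=
      h5 ▸ h4
    exact (div_le_div_iff_of_pos_right (Real.exp_pos t)).mpr h7
  -- conclude via the infimum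
  have hmem : (1 + c * γ ^ 2 / (2 * (1 + γ))) ^ p / (1 + γ) ∈
      ((fun γ : ℝ => (1 + c * γ ^ 2 / (2 * (1 + γ))) ^ p / (1 + γ)) '' Set.Ioi (0 : ℝ)) :=
    ⟨γ, Set.mem_Ioi.2 hγ, rfl⟩
  have hbdd : BddBelow
      ((fun γ : ℝ => (1 + c * γ ^ 2 / (2 * (1 + γ))) ^ p / (1 + γ)) '' Set.Ioi (0 : ℝ)) := by
    refine ⟨0, ?_⟩
    rintro y ⟨x, hx, rfl⟩
    have hx0 : 0 < x := Set.mem_Ioi.1 hx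
    have hx1 : (0:ℝ) < 1 + x := by linarith
    have hb : (0:ℝ) ≤ 1 + c * x ^ 2 / (2 * (1 + x)) := by
      have : (0:ℝ) ≤ c * x ^ 2 / (2 * (1 + x)) :=
        div_nonneg (by positivity) (by linarith)
      linarith
    exact div_nonneg (Real.rpow_nonneg hb p) hx1.le
  exact csInf_le_of_le hbdd hmem hval
end

section
/- For any fixed c > 0 and p ≥ 2, the function ζ(γ) = (1 + cγ²/(2(1+γ)))^p/(1+γ) is convex on (0, ∞). -/
open Set Real

noncomputable def zb (c γ : ℝ) : ℝ := 1 + c * γ ^ 2 / (2 * (1 + γ))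

lemma zb_pos {c γ : ℝ} (hc : 0 < c) (hγ : 0 < γ) : 0 < zb c γ := by
  unfold zb; positivity

lemma zb_hasDerivAt {c : ℝ} {x : ℝ} (hx : 0 < x) :
    HasDerivAt (fun γ : ℝ => zb c γ) (c * (x ^ 2 + 2 * x) / (2 * (1 + x) ^ 2)) x := by
  have hne : (2 * (1 + x)) ≠ 0 := by positivity
  have hnum : HasDerivAt (fun γ : ℝ => c * γ ^ 2) (c * (2 * x)) x := by
    simpa using (hasDerivAt_pow 2 x).const_mul c
  have hden : HasDerivAt (fun γ : ℝ => 2 * (1 + γ)) 2 x := by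
    simpa using ((hasDerivAt_id x).const_add 1).const_mul 2
  have h := (hnum.div hden hne).const_add 1
  refine h.congr_deriv ?_
  field_simp
  ring

noncomputable def zf1 (c p x : ℝ) : ℝ :=
  (c * (x ^ 2 + 2 * x) * p * (zb c x) ^ (p - 1) - 2 * (1 + x) * (zb c x) ^ p) /
    (2 * (1 + x) ^ 3)

lemma zf_hasDerivAt {c p : ℝ} (hc : 0 < c) {x : ℝ} (hx : 0 < x) :
    HasDerivAt (fun γ : ℝ => (1 + c * γ ^ 2 / (2 * (1 + γ))) ^ p / (1 + γ)) (zf1 c p x) x := by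
  have hbx : (0:ℝ) < zb c x := zb_pos hc hx
  have h1x : (0:ℝ) < 1 + x := by linarith
  have hN : HasDerivAt (fun γ : ℝ => (zb c γ) ^ p)
      (c * (x ^ 2 + 2 * x) / (2 * (1 + x) ^ 2) * p * (zb c x) ^ (p - 1)) x :=
    (zb_hasDerivAt hx).rpow_const (Or.inl hbx.ne')
  have hden : HasDerivAt (fun γ : ℝ => 1 + γ) 1 x := by
    simpa using (hasDerivAt_id x).const_add 1
  have h := hN.div hden h1x.ne'
  have he : (fun γ : ℝ => (1 + c * γ ^ 2 / (2 * (1 + γ))) ^ p / (1 + γ)) =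
      fun γ : ℝ => (zb c γ) ^ p / (1 + γ) := rfl
  rw [he]
  refine h.congr_deriv ?_
  unfold zf1
  field_simp

noncomputable def zf2 (c p x : ℝ) : ℝ :=
  (zb c x) ^ (p - 2) *
    (p * (p - 1) * c ^ 2 * ((1 + x) ^ 2 - 1) ^ 2 +
      4 * p * c * (1 + x) * (2 - (1 + x) ^ 2) * zb c x +
      8 * (1 + x) ^ 2 * (zb c x) ^ 2) / (4 * (1 + x) ^ 5)

lemma zf1_hasDerivAt {c p : ℝ} (hc : 0 < c) (hp : 2 ≤ p) {x : ℝ} (hx : 0 < x) :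
    HasDerivAt (fun γ : ℝ => zf1 c p γ) (zf2 c p x) x := by
  have hbx : (0:ℝ) < zb c x := zb_pos hc hx
  have h1x : (0:ℝ) < 1 + x := by linarith
  have hb := zb_hasDerivAt (c := c) hx
  set d : ℝ := c * (x ^ 2 + 2 * x) / (2 * (1 + x) ^ 2) with hd
  have hA : HasDerivAt (fun γ : ℝ => c * (γ ^ 2 + 2 * γ)) (c * (2 * x + 2)) x := by
    have : HasDerivAt (fun γ : ℝ => γ ^ 2 + 2 * γ) (2 * x + 2) x := by
      simpa [Pi.add_def] using (hasDerivAt_pow 2 x).add (((hasDerivAt_id x)).const_mul 2)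
    exact this.const_mul c
  have hB1 : HasDerivAt (fun γ : ℝ => (zb c γ) ^ (p - 1)) (d * (p - 1) * (zb c x) ^ (p - 2)) x := by
    have := hb.rpow_const (p := p - 1) (Or.inl hbx.ne')
    simpa [show p - 1 - 1 = p - 2 by ring] using this
  have hN : HasDerivAt (fun γ : ℝ => (zb c γ) ^ p) (d * p * (zb c x) ^ (p - 1)) x :=
    hb.rpow_const (Or.inl hbx.ne')
  have hP1 : HasDerivAt (fun γ : ℝ => c * (γ ^ 2 + 2 * γ) * p * (zb c γ) ^ (p - 1))
      (c * (2 * x + 2) * p * (zb c x) ^ (p - 1) +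
        c * (x ^ 2 + 2 * x) * p * (d * (p - 1) * (zb c x) ^ (p - 2))) x :=
    (hA.mul_const p).mul hB1
  have hconst2 : HasDerivAt (fun γ : ℝ => 2 * (1 + γ)) 2 x := by
    simpa using ((hasDerivAt_id x).const_add 1).const_mul 2
  have hP2 : HasDerivAt (fun γ : ℝ => 2 * (1 + γ) * (zb c γ) ^ p)
      (2 * (zb c x) ^ p + 2 * (1 + x) * (d * p * (zb c x) ^ (p - 1))) x :=
    hconst2.mul hN
  have hQ : HasDerivAt (fun γ : ℝ => 2 * (1 + γ) ^ 3) (2 * (3 * (1 + x) ^ 2)) x := by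
    have h0 : HasDerivAt (fun γ : ℝ => (1 + γ) ^ 3) (3 * (1 + x) ^ 2) x := by
      have := ((hasDerivAt_id x).const_add 1).pow 3
      simpa [Pi.pow_def] using this
    simpa using h0.const_mul 2
  have hQne : (2 * (1 + x) ^ 3) ≠ 0 := by positivity
  have h := (hP1.sub hP2).div hQ hQne
  have he : (fun γ : ℝ => zf1 c p γ) =
      fun γ : ℝ => (c * (γ ^ 2 + 2 * γ) * p * (zb c γ) ^ (p - 1) - 2 * (1 + γ) * (zb c γ) ^ p) /
        (2 * (1 + γ) ^ 3) := rfl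
  rw [he]
  refine h.congr_deriv ?_
  simp only [Pi.sub_apply]
  have e1 : (zb c x) ^ (p - 1) = (zb c x) ^ (p - 2) * zb c x := by
    rw [← Real.rpow_add_one hbx.ne']
    congr 1; ring
  have e2 : (zb c x) ^ p = (zb c x) ^ (p - 2) * zb c x * zb c x := by
    rw [← Real.rpow_add_one hbx.ne', ← Real.rpow_add_one hbx.ne']
    congr 1; ring
  rw [zf2, e1, e2, hd]
  field_simp
  ring

theorem zeta_convex (c p : ℝ) (hc : 0 < c) (hp : 2 ≤ p) :
    ConvexOn ℝ (Set.Ioi (0 : ℝ))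
      (fun γ : ℝ => (1 + c * γ ^ 2 / (2 * (1 + γ))) ^ p / (1 + γ)) := by
  have hint : interior (Set.Ioi (0:ℝ)) = Set.Ioi 0 := interior_Ioi
  apply convexOn_of_hasDerivWithinAt2_nonneg (f' := zf1 c p) (f'' := zf2 c p) (convex_Ioi 0)
  · intro x hx
    exact ((zf_hasDerivAt hc hx).continuousAt).continuousWithinAt
  · intro x hx
    rw [hint] at hx ⊢
    exact (zf_hasDerivAt hc hx).hasDerivWithinAt
  · intro x hx
    rw [hint] at hx ⊢
    exact (zf1_hasDerivAt hc hp hx).hasDerivWithinAt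
  · intro x hx
    rw [hint] at hx
    have hx' : (0:ℝ) < x := hx
    have hbx : (0:ℝ) < zb c x := zb_pos hc hx'
    have h1x : (0:ℝ) < 1 + x := by linarith
    unfold zf2
    have hG : 0 ≤ p * (p - 1) * c ^ 2 * ((1 + x) ^ 2 - 1) ^ 2 +
        4 * p * c * (1 + x) * (2 - (1 + x) ^ 2) * zb c x +
        8 * (1 + x) ^ 2 * (zb c x) ^ 2 := by
      set u := 1 + x
      set t := zb c x
      have hpp : 0 < p * (p - 1) := by nlinarith
      have key : p * (p - 1) * (p * (p - 1) * c ^ 2 * (u ^ 2 - 1) ^ 2 +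
          4 * p * c * u * (2 - u ^ 2) * t + 8 * u ^ 2 * t ^ 2) =
          (p * (p - 1) * c * (u ^ 2 - 1) - 2 * p * u * t) ^ 2 +
          4 * p * (p - 2) * u ^ 2 * t ^ 2 + 4 * p ^ 2 * (p - 1) * u * t * c := by
        ring
      have hX : 0 ≤ (p * (p - 1) * c * (u ^ 2 - 1) - 2 * p * u * t) ^ 2 +
          4 * p * (p - 2) * u ^ 2 * t ^ 2 + 4 * p ^ 2 * (p - 1) * u * t * c := by
        have h1 : 0 ≤ (p * (p - 1) * c * (u ^ 2 - 1) - 2 * p * u * t) ^ 2 := sq_nonneg _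
        have h2 : 0 ≤ 4 * p * (p - 2) * u ^ 2 * t ^ 2 := by
          have : (0:ℝ) ≤ p - 2 := by linarith
          positivity
        have h3 : 0 ≤ 4 * p ^ 2 * (p - 1) * u * t * c := by
          have : (0:ℝ) ≤ p - 1 := by linarith
          have hu : (0:ℝ) < u := h1x
          positivity
        linarith
      nlinarith [hX, key, hpp]
    exact div_nonneg (mul_nonneg (Real.rpow_nonneg hbx.le _) hG) (by positivity)
end

section
/- Let H be a symmetric positive definite operator on ℝⁿ, s, a ∈ ℝⁿ, β ∈ ℝ, and suppose there exists x with ⟨H⁻¹x, x⟩ < 1 and ⟨a, x⟩ ≤ β. Then the problem min_{τ ≥ 0} [‖s − τa‖* + τβ], where ‖v‖* = ⟨v, Hv⟩^{1/2}, has a solution: τ* = 0 if ⟨a, Hs⟩ ≤ β‖s‖*, and otherwise τ* is the unconstrained minimizer of τ ↦ ‖s − τa‖* + τβ. Moreover, this solution is unique if β < ‖a‖*. -/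
open Matrix

private lemma cs_aux {n : ℕ} {M : Matrix (Fin n) (Fin n) ℝ}
    (hQ : ∀ w : Fin n → ℝ, 0 ≤ w ⬝ᵥ M *ᵥ w)
    (hsym : ∀ p q : Fin n → ℝ, p ⬝ᵥ M *ᵥ q = q ⬝ᵥ M *ᵥ p)
    (u v : Fin n → ℝ) : (u ⬝ᵥ M *ᵥ v) ^ 2 ≤ (u ⬝ᵥ M *ᵥ u) * (v ⬝ᵥ M *ᵥ v) := by
  have hexp2 : ∀ x y : ℝ, (x • u + y • v) ⬝ᵥ M *ᵥ (x • u + y • v) =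
      x ^ 2 * (u ⬝ᵥ M *ᵥ u) + 2 * x * y * (u ⬝ᵥ M *ᵥ v) + y ^ 2 * (v ⬝ᵥ M *ᵥ v) := by
    intro x y
    simp only [Matrix.mulVec_add, Matrix.mulVec_smul, dotProduct_add, add_dotProduct,
      dotProduct_smul, smul_dotProduct, smul_eq_mul, hsym v u]
    ring
  set A := u ⬝ᵥ M *ᵥ u with hA
  set B := u ⬝ᵥ M *ᵥ v with hB
  set C := v ⬝ᵥ M *ᵥ v with hC
  rcases (hQ v).eq_or_lt with hC0 | hC0
  · have hCz : C = 0 := by rw [hC]; exact hC0.symm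
    by_cases hB0 : B = 0
    · rw [hB0]
      simpa using mul_nonneg (hQ u) (hQ v)
    · exfalso
      have hB2 : 0 < B ^ 2 := lt_of_le_of_ne (sq_nonneg B) (Ne.symm (pow_ne_zero 2 hB0))
      have h := hQ ((2 * B) • u + (-(A + 1)) • v)
      rw [hexp2, hCz] at h
      nlinarith [h, hB2, hQ u]
  · have hCp : 0 < C := by rw [hC]; exact hC0
    have h := hQ (C • u + (-B) • v)
    rw [hexp2] at h
    nlinarith [h, hCp]

set_option maxHeartbeats 2000000 in
theorem aux_prob_solution (n : ℕ) (H : Matrix (Fin n) (Fin n) ℝ) (hH : H.PosDef)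
    (s a : Fin n → ℝ) (β : ℝ)
    (hSlater : ∃ x : Fin n → ℝ, x ⬝ᵥ H⁻¹ *ᵥ x < 1 ∧ a ⬝ᵥ x ≤ β) :
    let φ : ℝ → ℝ := fun τ =>
      Real.sqrt ((s - τ • a) ⬝ᵥ H *ᵥ (s - τ • a)) + τ * β
    ∃ τstar : ℝ, τstar ∈ Set.Ici (0 : ℝ) ∧ IsMinOn φ (Set.Ici (0 : ℝ)) τstar ∧
      (a ⬝ᵥ H *ᵥ s ≤ β * Real.sqrt (s ⬝ᵥ H *ᵥ s) → τstar = 0) ∧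
      (¬ (a ⬝ᵥ H *ᵥ s ≤ β * Real.sqrt (s ⬝ᵥ H *ᵥ s)) → IsMinOn φ Set.univ τstar) ∧
      (β < Real.sqrt (a ⬝ᵥ H *ᵥ a) →
        ∀ τ ∈ Set.Ici (0 : ℝ), IsMinOn φ (Set.Ici (0 : ℝ)) τ → τ = τstar) := by
  intro φ
  obtain ⟨x, hx1, hx2⟩ := hSlater
  have hQ : ∀ w : Fin n → ℝ, 0 ≤ w ⬝ᵥ H *ᵥ w := fun w => by
    simpa using hH.posSemidef.dotProduct_mulVec_nonneg w
  have hHt : Hᵀ = H := by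
    have h := hH.1.eq
    rwa [Matrix.conjTranspose_eq_transpose_of_trivial] at h
  have hsymH : ∀ p q : Fin n → ℝ, p ⬝ᵥ H *ᵥ q = q ⬝ᵥ H *ᵥ p := fun p q => by
    rw [Matrix.dotProduct_mulVec, ← Matrix.mulVec_transpose, hHt, dotProduct_comm]
  have hHinv := hH.inv
  have hQinv : ∀ w : Fin n → ℝ, 0 ≤ w ⬝ᵥ H⁻¹ *ᵥ w := fun w => by
    simpa using hHinv.posSemidef.dotProduct_mulVec_nonneg w
  have hHinvt : (H⁻¹)ᵀ = H⁻¹ := by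
    have h := hHinv.1.eq
    rwa [Matrix.conjTranspose_eq_transpose_of_trivial] at h
  have hsymHinv : ∀ p q : Fin n → ℝ, p ⬝ᵥ H⁻¹ *ᵥ q = q ⬝ᵥ H⁻¹ *ᵥ p := fun p q => by
    rw [Matrix.dotProduct_mulVec, ← Matrix.mulVec_transpose, hHinvt, dotProduct_comm]
  set c := a ⬝ᵥ H *ᵥ a with hcdef
  set b := a ⬝ᵥ H *ᵥ s with hbdef
  set q0 := s ⬝ᵥ H *ᵥ s with hq0def
  have hq00 : 0 ≤ q0 := hQ s
  have hc0 : 0 ≤ c := hQ a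
  have hCS : b ^ 2 ≤ c * q0 := cs_aux hQ hsymH a s
  have hq : ∀ τ : ℝ, (s - τ • a) ⬝ᵥ H *ᵥ (s - τ • a) = q0 - 2 * τ * b + τ ^ 2 * c := by
    intro τ
    simp only [Matrix.mulVec_sub, Matrix.mulVec_smul, dotProduct_sub, sub_dotProduct,
      dotProduct_smul, smul_dotProduct, smul_eq_mul]
    rw [hsymH s a, ← hbdef, ← hcdef, ← hq0def]
    ring
  have hφ : ∀ τ : ℝ, φ τ = Real.sqrt (q0 - 2 * τ * b + τ ^ 2 * c) + τ * β := fun τ => by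
    rw [show φ τ = Real.sqrt ((s - τ • a) ⬝ᵥ H *ᵥ (s - τ • a)) + τ * β from rfl, hq τ]
  have hq_nonneg : ∀ τ : ℝ, 0 ≤ q0 - 2 * τ * b + τ ^ 2 * c := fun τ => hq τ ▸ hQ _
  have hsqrtq0 : Real.sqrt q0 ^ 2 = q0 := Real.sq_sqrt hq00
  -- Slater consequences
  have hinvH : H⁻¹ * H = 1 := Matrix.nonsing_inv_mul H hH.det_pos.ne'.isUnit
  have hHa : H⁻¹ *ᵥ (H *ᵥ a) = a := by
    rw [Matrix.mulVec_mulVec, hinvH, Matrix.one_mulVec]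
  have hax : (a ⬝ᵥ x) ^ 2 ≤ c * (x ⬝ᵥ H⁻¹ *ᵥ x) := by
    have h := cs_aux hQinv hsymHinv (H *ᵥ a) x
    have e1 : (H *ᵥ a) ⬝ᵥ H⁻¹ *ᵥ x = a ⬝ᵥ x := by
      rw [hsymHinv, hHa]
      exact dotProduct_comm x a
    have e2 : (H *ᵥ a) ⬝ᵥ H⁻¹ *ᵥ (H *ᵥ a) = c := by
      rw [hHa, dotProduct_comm, ← hcdef]
    rw [e1, e2] at h
    exact h
  have hβ0 : c = 0 → 0 ≤ β := by
    intro h0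
    have h1 : (a ⬝ᵥ x) ^ 2 ≤ 0 := by rw [h0] at hax; simpa using hax
    have h2 : (a ⬝ᵥ x) ^ 2 = 0 := le_antisymm h1 (sq_nonneg _)
    have h3 : a ⬝ᵥ x = 0 := by
      exact sq_eq_zero_iff.mp h2
    linarith [hx2, h3.symm.le]
  have hβ2 : 0 < c → -Real.sqrt c < β := by
    intro hc
    have h1 : (a ⬝ᵥ x) ^ 2 < c := lt_of_le_of_lt hax (by nlinarith [hx1, hc, hQinv x])
    have hsq : Real.sqrt c ^ 2 = c := Real.sq_sqrt hc0
    nlinarith [h1, hsq, hx2, Real.sqrt_pos.mpr hc, sq_nonneg (a ⬝ᵥ x + Real.sqrt c)]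
  have hβ1 : -Real.sqrt c ≤ β := by
    rcases hc0.eq_or_lt with h | h
    · rw [← h, Real.sqrt_zero, neg_zero]; exact hβ0 h.symm
    · exact (hβ2 h).le
  -- Cauchy–Schwarz applied to (s - τ a, s)
  have hCS2 : ∀ τ : ℝ, (q0 - τ * b) ^ 2 ≤ (q0 - 2 * τ * b + τ ^ 2 * c) * q0 := by
    intro τ
    have h := cs_aux hQ hsymH (s - τ • a) s
    have e : (s - τ • a) ⬝ᵥ H *ᵥ s = q0 - τ * b := by
      simp only [sub_dotProduct, smul_dotProduct, smul_eq_mul, ← hq0def, ← hbdef]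
    rw [hq τ, e, ← hq0def] at h
    exact h
  have hLkey : 0 < q0 → ∀ τ : ℝ, τ * b ≤ τ * (β * Real.sqrt q0) →
      Real.sqrt q0 - τ * β ≤ Real.sqrt (q0 - 2 * τ * b + τ ^ 2 * c) := by
    intro hq0pos τ hτb
    have h2 : q0 - τ * b ≤ Real.sqrt (q0 - 2 * τ * b + τ ^ 2 * c) * Real.sqrt q0 := by
      calc q0 - τ * b ≤ |q0 - τ * b| := le_abs_self _
        _ = Real.sqrt ((q0 - τ * b) ^ 2) := (Real.sqrt_sq_eq_abs _).symm
        _ ≤ Real.sqrt ((q0 - 2 * τ * b + τ ^ 2 * c) * q0) := Real.sqrt_le_sqrt (hCS2 τ)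
        _ = _ := Real.sqrt_mul (hq_nonneg τ) q0
    have hq0pos' : 0 < Real.sqrt q0 := Real.sqrt_pos.mpr hq0pos
    have h3 : (Real.sqrt q0 - τ * β) * Real.sqrt q0 ≤
        Real.sqrt (q0 - 2 * τ * b + τ ^ 2 * c) * Real.sqrt q0 := by
      nlinarith [h2, hsqrtq0, hτb]
    exact le_of_mul_le_mul_right h3 hq0pos'
  -- uniqueness
  have huniq : β < Real.sqrt c → ∀ τ₁ τ₂ : ℝ, 0 ≤ τ₁ → 0 ≤ τ₂ →
      IsMinOn φ (Set.Ici 0) τ₁ → IsMinOn φ (Set.Ici 0) τ₂ → τ₁ = τ₂ := by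
    intro hβc
    have hcpos : 0 < c := by
      rcases hc0.eq_or_lt with h | h
      · exfalso
        have h0 := hβ0 h.symm
        rw [← h, Real.sqrt_zero] at hβc
        linarith
      · exact h
    have hβsq : β ^ 2 < c := by
      have h1 := hβ2 hcpos
      nlinarith [Real.sq_sqrt hc0, Real.sqrt_pos.mpr hcpos]
    have key : ∀ τ₁ τ₂ : ℝ, 0 ≤ τ₁ → τ₁ < τ₂ →
        IsMinOn φ (Set.Ici 0) τ₁ → IsMinOn φ (Set.Ici 0) τ₂ → False := by
      intro τ₁ τ₂ h1 h12 hm1 hm2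
      have h2 : (0:ℝ) ≤ τ₂ := le_trans h1 h12.le
      have hm : (0:ℝ) ≤ (τ₁ + τ₂) / 2 := by linarith
      have e1 : φ τ₁ ≤ φ τ₂ := isMinOn_iff.mp hm1 τ₂ (Set.mem_Ici.mpr h2)
      have e2 : φ τ₂ ≤ φ τ₁ := isMinOn_iff.mp hm2 τ₁ (Set.mem_Ici.mpr h1)
      have e3 : φ τ₁ ≤ φ ((τ₁ + τ₂) / 2) := isMinOn_iff.mp hm1 _ (Set.mem_Ici.mpr hm)
      rw [hφ τ₁, hφ τ₂] at e1 e2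
      rw [hφ τ₁, hφ ((τ₁ + τ₂) / 2)] at e3
      set N1 := Real.sqrt (q0 - 2 * τ₁ * b + τ₁ ^ 2 * c) with hN1def
      set N2 := Real.sqrt (q0 - 2 * τ₂ * b + τ₂ ^ 2 * c) with hN2def
      set Nm := Real.sqrt (q0 - 2 * ((τ₁ + τ₂) / 2) * b + ((τ₁ + τ₂) / 2) ^ 2 * c) with hNmdef
      have hN1 : N1 ^ 2 = q0 - 2 * τ₁ * b + τ₁ ^ 2 * c := Real.sq_sqrt (hq_nonneg τ₁)
      have hN2 : N2 ^ 2 = q0 - 2 * τ₂ * b + τ₂ ^ 2 * c := Real.sq_sqrt (hq_nonneg τ₂)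
      have hNm : Nm ^ 2 = q0 - 2 * ((τ₁ + τ₂) / 2) * b + ((τ₁ + τ₂) / 2) ^ 2 * c :=
        Real.sq_sqrt (hq_nonneg _)
      have hN1n : 0 ≤ N1 := Real.sqrt_nonneg _
      have hN2n : 0 ≤ N2 := Real.sqrt_nonneg _
      have heq : N1 + τ₁ * β = N2 + τ₂ * β := le_antisymm e1 e2
      have h5 : (N1 + N2) / 2 ≤ Nm := by linarith
      have h6 : 0 ≤ (N1 + N2) / 2 := by linarith
      have h7 : ((N1 + N2) / 2) ^ 2 ≤ Nm ^ 2 := by nlinarith [h5, h6]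
      have h8 : (N1 - N2) ^ 2 = (τ₂ - τ₁) ^ 2 * β ^ 2 := by
        rw [show N1 - N2 = (τ₂ - τ₁) * β from by linarith]
        ring
      have e1' : (N1 - N2) ^ 2 = 2 * N1 ^ 2 + 2 * N2 ^ 2 - (N1 + N2) ^ 2 := by ring
      have e2' : 4 * Nm ^ 2 = 2 * N1 ^ 2 + 2 * N2 ^ 2 - c * (τ₂ - τ₁) ^ 2 := by
        rw [hN1, hN2, hNm]; ring
      have e3' : ((N1 + N2) / 2) ^ 2 = (N1 + N2) ^ 2 / 4 := by ring
      have h9 : c * (τ₂ - τ₁) ^ 2 ≤ (N1 - N2) ^ 2 := by linarith [h7, e1', e2', e3']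
      have hd : 0 < (τ₂ - τ₁) ^ 2 := pow_pos (by linarith) 2
      have h10 : (τ₂ - τ₁) ^ 2 * β ^ 2 < (τ₂ - τ₁) ^ 2 * c :=
        mul_lt_mul_of_pos_left hβsq hd
      linarith [h8, h9, h10]
    intro τ₁ τ₂ h1 h2 hm1 hm2
    rcases lt_trichotomy τ₁ τ₂ with h | h | h
    · exact (key τ₁ τ₂ h1 h hm1 hm2).elim
    · exact h
    · exact (key τ₂ τ₁ h2 h hm2 hm1).elim
  by_cases hcase : b ≤ β * Real.sqrt q0
  · -- τstar = 0
    have hmin : IsMinOn φ (Set.Ici (0:ℝ)) 0 := by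
      rw [isMinOn_iff]
      intro τ hτ
      have hτ0 : (0:ℝ) ≤ τ := Set.mem_Ici.mp hτ
      rw [hφ 0, hφ τ]
      have e0 : q0 - 2 * 0 * b + 0 ^ 2 * c = q0 := by ring
      rw [e0, zero_mul, add_zero]
      rcases hq00.eq_or_lt with h0 | h0
      · have hb0 : b = 0 := by
          have h1 : b ^ 2 ≤ 0 := by rw [← h0] at hCS; simpa using hCS
          have h2 : b ^ 2 = 0 := le_antisymm h1 (sq_nonneg b)
          exact sq_eq_zero_iff.mp h2
        have hq0z : q0 = 0 := h0.symm
        have harg : q0 - 2 * τ * b + τ ^ 2 * c = τ ^ 2 * c := by rw [hq0z, hb0]; ring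
        rw [harg, hq0z, Real.sqrt_zero]
        rcases le_or_gt 0 β with hβp | hβn
        · have := Real.sqrt_nonneg (τ ^ 2 * c)
          nlinarith
        · have hβsq : β ^ 2 ≤ c := by
            nlinarith [hβ1, Real.sq_sqrt hc0, Real.sqrt_nonneg c]
          have h1 : -(τ * β) ≤ Real.sqrt (τ ^ 2 * c) :=
            Real.le_sqrt_of_sq_le (by nlinarith [hβsq, sq_nonneg τ])
          linarith
      · have h1 : τ * b ≤ τ * (β * Real.sqrt q0) := mul_le_mul_of_nonneg_left hcase hτ0
        have := hLkey h0 τ h1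
        linarith
    refine ⟨0, Set.self_mem_Ici, hmin, fun _ => rfl, fun h => absurd hcase h, ?_⟩
    intro hβc τ hτ hminτ
    exact huniq hβc τ 0 (Set.mem_Ici.mp hτ) (le_refl 0) hminτ hmin
  · push_neg at hcase
    have hq0pos : 0 < q0 := by
      rcases hq00.eq_or_lt with h | h
      · exfalso
        have hb0 : b = 0 := by
          have h1 : b ^ 2 ≤ 0 := by rw [← h] at hCS; simpa using hCS
          have h2 : b ^ 2 = 0 := le_antisymm h1 (sq_nonneg b)
          exact sq_eq_zero_iff.mp h2
        rw [← h, Real.sqrt_zero, mul_zero, hb0] at hcase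
        exact lt_irrefl 0 hcase
      · exact h
    have hcpos : 0 < c := by
      rcases hc0.eq_or_lt with h | h
      · exfalso
        have hβnn := hβ0 h.symm
        have hb0 : b = 0 := by
          have h1 : b ^ 2 ≤ 0 := by rw [← h] at hCS; simpa using hCS
          have h2 : b ^ 2 = 0 := le_antisymm h1 (sq_nonneg b)
          exact sq_eq_zero_iff.mp h2
        rw [hb0] at hcase
        nlinarith [Real.sqrt_nonneg q0, hβnn, hcase]
      · exact h
    have hscb : 0 < Real.sqrt c + β := by
      have := hβ2 hcpos
      linarith
    set R := 2 * Real.sqrt q0 / (Real.sqrt c + β) with hRdef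
    have hR0 : 0 ≤ R := div_nonneg (by positivity) hscb.le
    have hφc : Continuous φ := by
      have hfe : φ = fun τ => Real.sqrt (q0 - 2 * τ * b + τ ^ 2 * c) + τ * β := funext hφ
      rw [hfe]
      have c1 : Continuous fun τ : ℝ => q0 - 2 * τ * b + τ ^ 2 * c :=
        (continuous_const.sub ((continuous_const.mul continuous_id).mul
          continuous_const)).add ((continuous_pow 2).mul continuous_const)
      exact (Real.continuous_sqrt.comp c1).add (continuous_id.mul continuous_const)
    obtain ⟨τ1, hτ1mem, hτ1min⟩ :=
      isCompact_Icc.exists_isMinOn (Set.nonempty_Icc.mpr hR0) hφc.continuousOn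
    have hτ1mem' : τ1 ∈ Set.Ici (0:ℝ) := Set.mem_Ici.mpr hτ1mem.1
    have hφ0R : φ τ1 ≤ φ 0 := isMinOn_iff.mp hτ1min 0 (Set.left_mem_Icc.mpr hR0)
    have hφ0val : φ 0 = Real.sqrt q0 := by rw [hφ 0]; norm_num
    have hb' : b ≤ Real.sqrt c * Real.sqrt q0 := by
      calc b ≤ |b| := le_abs_self b
        _ = Real.sqrt (b ^ 2) := (Real.sqrt_sq_eq_abs b).symm
        _ ≤ Real.sqrt (c * q0) := Real.sqrt_le_sqrt hCS
        _ = _ := Real.sqrt_mul hc0 q0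
    have hcoer : ∀ τ : ℝ, 0 ≤ τ → τ * (Real.sqrt c + β) - Real.sqrt q0 ≤ φ τ := by
      intro τ hτ
      rw [hφ τ]
      have h' : (τ * Real.sqrt c) ^ 2 = τ ^ 2 * c := by
        rw [mul_pow, Real.sq_sqrt hc0]
      have hmul : τ * b ≤ τ * (Real.sqrt c * Real.sqrt q0) :=
        mul_le_mul_of_nonneg_left hb' hτ
      have h1 : τ * Real.sqrt c - Real.sqrt q0 ≤
          Real.sqrt (q0 - 2 * τ * b + τ ^ 2 * c) :=
        Real.le_sqrt_of_sq_le (by nlinarith [hmul, h', hsqrtq0])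
      linarith
    have huniv : IsMinOn φ Set.univ τ1 := by
      rw [isMinOn_iff]
      intro τ _
      rcases le_or_gt τ R with hτR | hτR
      · rcases le_or_gt 0 τ with h0τ | h0τ
        · exact isMinOn_iff.mp hτ1min τ ⟨h0τ, hτR⟩
        · have hb2 : τ * b ≤ τ * (β * Real.sqrt q0) :=
            mul_le_mul_of_nonpos_left hcase.le h0τ.le
          have h1 := hLkey hq0pos τ hb2
          calc φ τ1 ≤ Real.sqrt q0 := hφ0val ▸ hφ0R
            _ ≤ Real.sqrt (q0 - 2 * τ * b + τ ^ 2 * c) + τ * β := by linarith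
            _ = φ τ := (hφ τ).symm
      · have h0τ : 0 ≤ τ := le_trans hR0 hτR.le
        have h1 := hcoer τ h0τ
        have hRe : 2 * Real.sqrt q0 = R * (Real.sqrt c + β) :=
          (div_mul_cancel₀ _ hscb.ne').symm
        have h2 : R * (Real.sqrt c + β) ≤ τ * (Real.sqrt c + β) :=
          (mul_le_mul_of_nonneg_right hτR.le hscb.le)
        calc φ τ1 ≤ Real.sqrt q0 := hφ0val ▸ hφ0R
          _ ≤ τ * (Real.sqrt c + β) - Real.sqrt q0 := by linarith [hRe, h2]
          _ ≤ φ τ := h1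
    have hIci : IsMinOn φ (Set.Ici (0:ℝ)) τ1 := huniv.on_subset (Set.subset_univ _)
    refine ⟨τ1, hτ1mem', hIci, fun h => absurd h (not_le.mpr hcase), fun _ => huniv, ?_⟩
    intro hβc τ hτ hminτ
    exact huniq hβc τ τ1 (Set.mem_Ici.mp hτ) hτ1mem.1 hminτ hIci
end
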